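/- arXiv:2101.01792 — 4 statements merged into one kernel-verified Lean document; each statement's English description precedes it below -/
import Mathlib

section
/- Let a ∈ Σ_n with normalized reweighting w^W(a,I)_k = a_{i_k}/∑_{j∈I} a_j for I = (i_1,…,i_m) without repeated indices (and uniform weights if the denominator vanishes), and let P_a^W(I) = (1/m)·((n-m)!/(n-1)!)·∑_{j∈I} a_j. Then E_{I∼P_a^W}[ Q_I^T w^W(a,I) ] = a, where Q_I is the m×n matrix with (Q_I)_{k,j} = δ_{i_k, j}. In words, the admissibility condition holds for the pair (w^W, P^W). -/
open Finset

/-- Injective tuples avoiding `j` correspond to embeddings into the complement of `j`. -/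
def avoidEquiv (n m : ℕ) (j : Fin n) :
    {I : Fin m → Fin n // Function.Injective I ∧ ¬∃ k, I k = j} ≃
      (Fin m ↪ {x : Fin n // x ≠ j}) where
  toFun I := ⟨fun k => ⟨I.1 k, fun h => I.2.2 ⟨k, h⟩⟩,
    fun a b h => I.2.1 (congrArg Subtype.val h)⟩
  invFun f := ⟨fun k => (f k).1,
    fun a b h => f.injective (Subtype.ext h), fun ⟨k, h⟩ => (f k).2 h⟩
  left_inv I := rfl
  right_inv f := rfl

theorem card_inj_hit (n m : ℕ) (j : Fin n) :
    Fintype.card {I : Fin m → Fin n // Function.Injective I ∧ ∃ k, I k = j}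
      + (n - 1).descFactorial m = n.descFactorial m := by
  classical
  have h2 : Fintype.card {I : Fin m → Fin n // Function.Injective I ∧ ¬∃ k, I k = j}
      = (n - 1).descFactorial m := by
    rw [Fintype.card_congr (avoidEquiv n m j), Fintype.card_embedding_eq]
    congr 1
    · have : Fintype.card {x : Fin n // x ≠ j} = Fintype.card {x : Fin n // ¬ x = j} := rfl
      rw [this, Fintype.card_subtype_compl, Fintype.card_subtype_eq, Fintype.card_fin]
    · exact Fintype.card_fin m
  have h3 : Fintype.card {I : Fin m → Fin n // Function.Injective I}
      = n.descFactorial m := by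
    rw [Fintype.card_congr (Equiv.subtypeInjectiveEquivEmbedding (Fin m) (Fin n)),
      Fintype.card_embedding_eq, Fintype.card_fin, Fintype.card_fin]
  rw [← h2, ← h3]
  have e1 := Fintype.card_congr (Equiv.subtypeSubtypeEquivSubtypeInter
    (fun I : Fin m → Fin n => Function.Injective I) (fun I => ∃ k, I k = j))
  have e2 := Fintype.card_congr (Equiv.subtypeSubtypeEquivSubtypeInter
    (fun I : Fin m → Fin n => Function.Injective I) (fun I => ¬∃ k, I k = j))
  have e3 := Fintype.card_congr (Equiv.sumCompl
    (fun I : {I : Fin m → Fin n // Function.Injective I} => ∃ k, I.1 k = j))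
  rw [Fintype.card_sum] at e3
  rw [← e1, ← e2, e3]

/-- The key factorial identity. -/
theorem keyC (n m : ℕ) (hm : 1 ≤ m) (hmn : m ≤ n) :
    ((n.descFactorial m - (n - 1).descFactorial m : ℕ) : ℝ) *
      ((1 / (m : ℝ)) * ((Nat.factorial (n - m) : ℝ) / (Nat.factorial (n - 1)))) = 1 := by
  have F1 : (n - m).factorial * n.descFactorial m = n.factorial :=
    Nat.factorial_mul_descFactorial hmn
  have F2 : (n - m).factorial * (n - 1).descFactorial m = (n - 1).factorial * (n - m) := by
    rcases eq_or_lt_of_le hmn with h | h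
    · have : n - 1 < m := by omega
      rw [Nat.descFactorial_eq_zero_iff_lt.mpr this]
      simp [h]
    · have hm1 : m ≤ n - 1 := by omega
      have hrec := Nat.factorial_mul_descFactorial hm1
      have hnm : n - m = (n - 1 - m) + 1 := by omega
      rw [hnm, Nat.factorial_succ]
      rw [mul_assoc, hrec]
      ring
  have F3 : n.factorial = n * (n - 1).factorial := by
    have h : n = (n - 1) + 1 := by omega
    calc n.factorial = ((n - 1) + 1).factorial := by rw [← h]
      _ = ((n - 1) + 1) * (n - 1).factorial := Nat.factorial_succ _
      _ = n * (n - 1).factorial := by rw [← h]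
  have hle : (n - 1).descFactorial m ≤ n.descFactorial m := by
    have h := Nat.mul_le_mul_left (n - m).factorial
      (le_refl ((n - 1).descFactorial m))
    nlinarith [F1, F2, Nat.factorial_pos (n - m), Nat.factorial_pos (n - 1),
      Nat.sub_le n m, Nat.one_le_iff_ne_zero.mpr (Nat.factorial_ne_zero (n - m))]
  have hmne : (m : ℝ) ≠ 0 := Nat.cast_ne_zero.mpr (by omega)
  have hfne : ((n - 1).factorial : ℝ) ≠ 0 := Nat.cast_ne_zero.mpr (Nat.factorial_ne_zero _)
  rw [Nat.cast_sub hle]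
  have e1 : ((n - m).factorial : ℝ) * (n.descFactorial m : ℝ) = (n.factorial : ℝ) := by
    exact_mod_cast congrArg Nat.cast F1
  have e2 : ((n - m).factorial : ℝ) * ((n - 1).descFactorial m : ℝ)
      = ((n - 1).factorial : ℝ) * ((n : ℝ) - (m : ℝ)) := by
    have h := congrArg (Nat.cast : ℕ → ℝ) F2
    push_cast [Nat.cast_sub hmn] at h
    linarith [h]
  have e3 : (n.factorial : ℝ) = (n : ℝ) * ((n - 1).factorial : ℝ) := by
    exact_mod_cast congrArg Nat.cast F3
  field_simp
  linear_combination e1 - e2 + e3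

/-- Admissibility of the pair `(w^W, P^W)`: with the normalized reweighting
`w^W(a,I)_k = a_{i_k}/∑_{j∈I} a_j` (uniform `1/m` when the denominator vanishes)
and the without-replacement law `P_a^W(I) = (1/m)·((n-m)!/(n-1)!)·∑_{j∈I} a_j`
on `m`-tuples with pairwise distinct entries,
`E_{I∼P_a^W}[ Q_I^T w^W(a,I) ] = a` coordinatewise. -/
theorem stmt4 (n m : ℕ) (hm : 1 ≤ m) (hmn : m ≤ n) (a : Fin n → ℝ)
    (ha : ∀ j, 0 ≤ a j) (hsum : ∑ j, a j = 1) (j : Fin n) :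
    ∑ I : Fin m → Fin n,
      (if Function.Injective I then
        (1 / (m : ℝ)) * ((Nat.factorial (n - m) : ℝ) / (Nat.factorial (n - 1))) *
          ∑ l, a (I l)
      else 0) *
      (∑ k, if I k = j then
          (if (∑ l, a (I l)) = 0 then (1 : ℝ) / m else a (I k) / ∑ l, a (I l))
        else 0) = a j := by
  classical
  set C : ℝ := (1 / (m : ℝ)) * ((Nat.factorial (n - m) : ℝ) / (Nat.factorial (n - 1)))
    with hC
  -- Step 1: pointwise simplification
  have step1 : ∀ I : Fin m → Fin n,
      (if Function.Injective I then C * ∑ l, a (I l) else 0) *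
      (∑ k, if I k = j then
          (if (∑ l, a (I l)) = 0 then (1 : ℝ) / m else a (I k) / ∑ l, a (I l))
        else 0)
      = (if Function.Injective I ∧ ∃ k, I k = j then (1 : ℝ) else 0) * (C * a j) := by
    intro I
    by_cases hI : Function.Injective I
    · simp only [if_pos hI, and_iff_right hI]
      by_cases hS : (∑ l, a (I l)) = 0
      · have hz : ∀ k, a (I k) = 0 := fun k =>
          (Finset.sum_eq_zero_iff_of_nonneg (fun l _ => ha (I l))).mp hS k (mem_univ k)
        rw [hS, mul_zero, zero_mul]
        by_cases hex : ∃ k, I k = j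
        · obtain ⟨k, hk⟩ := hex
          have haj : a j = 0 := hk ▸ hz k
          simp [haj]
        · simp [hex]
      · simp only [if_neg hS]
        have hsumk : (∑ k, if I k = j then a (I k) / ∑ l, a (I l) else 0)
            = (∑ k, if I k = j then a j else 0) / ∑ l, a (I l) := by
          rw [Finset.sum_div]
          refine Finset.sum_congr rfl fun k _ => ?_
          by_cases h : I k = j
          · rw [if_pos h, if_pos h, h]
          · rw [if_neg h, if_neg h, zero_div]
        rw [hsumk]
        have hind : (∑ k, if I k = j then a j else 0)
            = (if ∃ k, I k = j then (1 : ℝ) else 0) * a j := by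
          by_cases hex : ∃ k, I k = j
          · obtain ⟨k0, hk0⟩ := hex
            rw [if_pos ⟨k0, hk0⟩, one_mul]
            rw [Finset.sum_eq_single_of_mem k0 (mem_univ k0)]
            · rw [if_pos hk0]
            · intro k _ hk
              rw [if_neg fun h => hk (hI (h.trans hk0.symm))]
          · rw [if_neg hex]
            rw [Finset.sum_eq_zero fun k _ => if_neg fun h => hex ⟨k, h⟩, zero_mul]
        rw [hind]
        field_simp
    · simp [hI]
  rw [Finset.sum_congr rfl fun I _ => step1 I, ← Finset.sum_mul, Finset.sum_boole,
    ← Fintype.card_subtype]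
  have hcard : Fintype.card
        {I : Fin m → Fin n // Function.Injective I ∧ ∃ k, I k = j}
      = n.descFactorial m - (n - 1).descFactorial m :=
    Nat.eq_sub_of_add_eq (card_inj_hit n m j)
  rw [hcard, hC, ← mul_assoc, keyC n m hm hmn, one_mul]
end

section
/- With the setting of the previous statement, if additionally each Π_{I,J} is an optimal coupling for the cost submatrix C_{I,J} (so that ⟨Π_{I,J}, C_{I,J}⟩ equals the optimal transport cost between w₁(a,I) and w₂(b,J)), then the minibatch OT loss satisfies h̄(a,b) := E_{I,J}⟨Π_{I,J}, C_{I,J}⟩ = ⟨Π̄, C⟩ ≥ W_C(a,b), where W_C(a,b) = min_{Π ∈ U(a,b)} ⟨Π, C⟩ is the optimal transport cost between a and b for cost matrix C. In particular, the minibatch OT loss is an upper bound of the exact OT cost. -/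
open Finset

lemma swap3' {α β γ M : Type*} [Fintype α] [Fintype β] [Fintype γ] [AddCommMonoid M]
    (f : α → β → γ → M) :
    ∑ i, ∑ j, ∑ k, f i j k = ∑ j, ∑ k, ∑ i, f i j k := by
  rw [Finset.sum_comm]
  exact Finset.sum_congr rfl fun j _ => Finset.sum_comm

lemma swap4' {α β γ δ M : Type*} [Fintype α] [Fintype β] [Fintype γ] [Fintype δ] [AddCommMonoid M]
    (f : α → β → γ → δ → M) :
    ∑ i, ∑ j, ∑ k, ∑ l, f i j k l = ∑ k, ∑ l, ∑ i, ∑ j, f i j k l := by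
  calc ∑ i, ∑ j, ∑ k, ∑ l, f i j k l
      = ∑ j, ∑ k, ∑ i, ∑ l, f i j k l := swap3' (fun i j k => ∑ l, f i j k l)
    _ = ∑ j, ∑ k, ∑ l, ∑ i, f i j k l :=
        Finset.sum_congr rfl fun j _ => Finset.sum_congr rfl fun k _ => Finset.sum_comm
    _ = ∑ k, ∑ l, ∑ j, ∑ i, f i j k l := swap3' (fun j k l => ∑ i, f i j k l)
    _ = ∑ k, ∑ l, ∑ i, ∑ j, f i j k l :=
        Finset.sum_congr rfl fun k _ => Finset.sum_congr rfl fun l _ => Finset.sum_comm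

/-- With admissible `(w₁,P¹)`, `(w₂,P²)` and optimal minibatch couplings
`Π_{I,J}` for the cost submatrices `C_{I,J}`, the minibatch OT loss
`h̄(a,b) = E_{I,J}⟨Π_{I,J}, C_{I,J}⟩` equals `⟨Π̄, C⟩` and upper bounds the
exact OT cost `W_C(a,b) = inf_{Π∈U(a,b)} ⟨Π,C⟩` between `a` and `b`. -/
theorem stmt8 (n m : ℕ) (hm : 1 ≤ m)
    (a b : Fin n → ℝ) (ha0 : ∀ i, 0 ≤ a i) (hasum : ∑ i, a i = 1)
    (hb0 : ∀ i, 0 ≤ b i) (hbsum : ∑ i, b i = 1)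
    (C : Fin n → Fin n → ℝ) (hC : ∀ i j, 0 ≤ C i j)
    (w1 w2 : (Fin n → ℝ) → (Fin m → Fin n) → Fin m → ℝ)
    (P1 P2 : (Fin n → ℝ) → (Fin m → Fin n) → ℝ)
    (hP1prob : ∀ c : Fin n → ℝ, (∀ i, 0 ≤ c i) → (∑ i, c i = 1) →
      (∀ I, 0 ≤ P1 c I) ∧ ∑ I : Fin m → Fin n, P1 c I = 1)
    (hP2prob : ∀ c : Fin n → ℝ, (∀ i, 0 ≤ c i) → (∑ i, c i = 1) →
      (∀ J, 0 ≤ P2 c J) ∧ ∑ J : Fin m → Fin n, P2 c J = 1)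
    (hadm1 : ∀ c : Fin n → ℝ, (∀ i, 0 ≤ c i) → (∑ i, c i = 1) →
      ∀ j, ∑ I : Fin m → Fin n, P1 c I * (∑ k, if I k = j then w1 c I k else 0) = c j)
    (hadm2 : ∀ c : Fin n → ℝ, (∀ i, 0 ≤ c i) → (∑ i, c i = 1) →
      ∀ j, ∑ J : Fin m → Fin n, P2 c J * (∑ l, if J l = j then w2 c J l else 0) = c j)
    (Pi : (Fin m → Fin n) → (Fin m → Fin n) → Fin m → Fin m → ℝ)
    (hPi0 : ∀ I J k l, 0 ≤ Pi I J k l)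
    (hrow : ∀ I J k, ∑ l, Pi I J k l = w1 a I k)
    (hcol : ∀ I J l, ∑ k, Pi I J k l = w2 b J l)
    (hopt : ∀ (I J : Fin m → Fin n) (Γ : Fin m → Fin m → ℝ),
      (∀ k l, 0 ≤ Γ k l) → (∀ k, ∑ l, Γ k l = w1 a I k) → (∀ l, ∑ k, Γ k l = w2 b J l) →
      ∑ k, ∑ l, Pi I J k l * C (I k) (J l) ≤ ∑ k, ∑ l, Γ k l * C (I k) (J l))
    (Pibar : Fin n → Fin n → ℝ)
    (hPibar : ∀ i j : Fin n, Pibar i j =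
      ∑ I : Fin m → Fin n, ∑ J : Fin m → Fin n,
        P1 a I * P2 b J *
          ∑ k, ∑ l,
            (if I k = i then (1 : ℝ) else 0) * (if J l = j then (1 : ℝ) else 0) *
              Pi I J k l)
    (hbar : ℝ)
    (hhbar : hbar =
      ∑ I : Fin m → Fin n, ∑ J : Fin m → Fin n,
        P1 a I * P2 b J * ∑ k, ∑ l, Pi I J k l * C (I k) (J l)) :
    hbar = ∑ i, ∑ j, Pibar i j * C i j ∧
    sInf {v : ℝ | ∃ Γ : Fin n → Fin n → ℝ, (∀ i j, 0 ≤ Γ i j) ∧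
        (∀ i, ∑ j, Γ i j = a i) ∧ (∀ j, ∑ i, Γ i j = b j) ∧
        v = ∑ i, ∑ j, Γ i j * C i j} ≤ hbar := by
  obtain ⟨hP10, hP1sum⟩ := hP1prob a ha0 hasum
  obtain ⟨hP20, hP2sum⟩ := hP2prob b hb0 hbsum
  -- Part 1: hbar = ⟨Π̄, C⟩
  have part1 : hbar = ∑ i, ∑ j, Pibar i j * C i j := by
    rw [hhbar]
    symm
    simp only [hPibar]
    calc ∑ i, ∑ j, (∑ I : Fin m → Fin n, ∑ J : Fin m → Fin n,
            P1 a I * P2 b J * ∑ k, ∑ l,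
              (if I k = i then (1:ℝ) else 0) * (if J l = j then (1:ℝ) else 0) * Pi I J k l) * C i j
        = ∑ i, ∑ j, ∑ I : Fin m → Fin n, ∑ J : Fin m → Fin n,
            (P1 a I * P2 b J * ∑ k, ∑ l,
              (if I k = i then (1:ℝ) else 0) * (if J l = j then (1:ℝ) else 0) * Pi I J k l) * C i j := by
          simp only [Finset.sum_mul]
      _ = ∑ I : Fin m → Fin n, ∑ J : Fin m → Fin n, ∑ i, ∑ j,
            (P1 a I * P2 b J * ∑ k, ∑ l,
              (if I k = i then (1:ℝ) else 0) * (if J l = j then (1:ℝ) else 0) * Pi I J k l) * C i j :=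
          swap4' _
      _ = ∑ I : Fin m → Fin n, ∑ J : Fin m → Fin n,
            P1 a I * P2 b J * ∑ k, ∑ l, Pi I J k l * C (I k) (J l) := by
          refine Finset.sum_congr rfl fun I _ => Finset.sum_congr rfl fun J _ => ?_
          have : ∑ i, ∑ j, (∑ k, ∑ l,
              (if I k = i then (1:ℝ) else 0) * (if J l = j then (1:ℝ) else 0) * Pi I J k l) * C i j
              = ∑ k, ∑ l, Pi I J k l * C (I k) (J l) := by
            simp only [Finset.sum_mul]
            rw [swap4' (fun i j k l =>
              (if I k = i then (1:ℝ) else 0) * (if J l = j then (1:ℝ) else 0) * Pi I J k l * C i j)]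
            refine Finset.sum_congr rfl fun k _ => Finset.sum_congr rfl fun l _ => ?_
            simp [ite_mul, zero_mul, one_mul, Finset.sum_ite_eq, mul_comm]
          rw [← this]
          simp only [mul_assoc, ← Finset.mul_sum, Finset.sum_mul]
  refine ⟨part1, ?_⟩
  -- Π̄ is an admissible coupling
  have hTrow : ∀ (I J : Fin m → Fin n) (i : Fin n),
      ∑ j, ∑ k, ∑ l, (if I k = i then (1:ℝ) else 0) * (if J l = j then (1:ℝ) else 0) * Pi I J k l
        = ∑ k, if I k = i then w1 a I k else 0 := by
    intro I J i
    rw [swap3' (fun j k l =>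
      (if I k = i then (1:ℝ) else 0) * (if J l = j then (1:ℝ) else 0) * Pi I J k l)]
    refine Finset.sum_congr rfl fun k _ => ?_
    by_cases h : I k = i
    · simp [h, ite_mul, zero_mul, one_mul, Finset.sum_ite_eq, hrow I J k]
    · simp [h]
  have hTcol : ∀ (I J : Fin m → Fin n) (j : Fin n),
      ∑ i, ∑ k, ∑ l, (if I k = i then (1:ℝ) else 0) * (if J l = j then (1:ℝ) else 0) * Pi I J k l
        = ∑ l, if J l = j then w2 b J l else 0 := by
    intro I J j
    rw [swap3' (fun i k l =>
      (if I k = i then (1:ℝ) else 0) * (if J l = j then (1:ℝ) else 0) * Pi I J k l)]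
    -- now ∑ k, ∑ l, ∑ i, ...
    rw [Finset.sum_comm]
    refine Finset.sum_congr rfl fun l _ => ?_
    by_cases h : J l = j
    · simp [h, ite_mul, zero_mul, one_mul, mul_comm, Finset.sum_ite_eq, hcol I J l]
    · simp [h]
  have hbarrow : ∀ i, ∑ j, Pibar i j = a i := by
    intro i
    simp only [hPibar]
    rw [swap3' (fun j I J => P1 a I * P2 b J * ∑ k, ∑ l,
      (if I k = i then (1:ℝ) else 0) * (if J l = j then (1:ℝ) else 0) * Pi I J k l)]
    have : ∀ I J : Fin m → Fin n,
        ∑ j, P1 a I * P2 b J * ∑ k, ∑ l,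
          (if I k = i then (1:ℝ) else 0) * (if J l = j then (1:ℝ) else 0) * Pi I J k l
        = P2 b J * (P1 a I * ∑ k, if I k = i then w1 a I k else 0) := by
      intro I J
      rw [← Finset.mul_sum, hTrow I J i]
      ring
    simp only [this]
    have h2 : ∀ I : Fin m → Fin n,
        ∑ J : Fin m → Fin n, P2 b J * (P1 a I * ∑ k, if I k = i then w1 a I k else 0)
        = P1 a I * ∑ k, if I k = i then w1 a I k else 0 := by
      intro I; rw [← Finset.sum_mul, hP2sum, one_mul]
    simp only [h2]
    exact hadm1 a ha0 hasum i
  have hbarcol : ∀ j, ∑ i, Pibar i j = b j := by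
    intro j
    simp only [hPibar]
    rw [swap3' (fun i I J => P1 a I * P2 b J * ∑ k, ∑ l,
      (if I k = i then (1:ℝ) else 0) * (if J l = j then (1:ℝ) else 0) * Pi I J k l)]
    have h1 : ∀ I J : Fin m → Fin n,
        ∑ i, P1 a I * P2 b J * ∑ k, ∑ l,
          (if I k = i then (1:ℝ) else 0) * (if J l = j then (1:ℝ) else 0) * Pi I J k l
        = P1 a I * (P2 b J * ∑ l, if J l = j then w2 b J l else 0) := by
      intro I J
      rw [← Finset.mul_sum, hTcol I J j]
      ring
    simp only [h1]
    have h2 : ∀ I : Fin m → Fin n,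
        ∑ J : Fin m → Fin n, P1 a I * (P2 b J * ∑ l, if J l = j then w2 b J l else 0)
        = P1 a I * ∑ J : Fin m → Fin n, P2 b J * ∑ l, if J l = j then w2 b J l else 0 := by
      intro I; rw [← Finset.mul_sum]
    simp only [h2]
    rw [← Finset.sum_mul, hP1sum, one_mul]
    exact hadm2 b hb0 hbsum j
  have hbar0 : ∀ i j, 0 ≤ Pibar i j := by
    intro i j
    rw [hPibar]
    refine Finset.sum_nonneg fun I _ => Finset.sum_nonneg fun J _ => ?_
    refine mul_nonneg (mul_nonneg (hP10 I) (hP20 J)) ?_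
    refine Finset.sum_nonneg fun k _ => Finset.sum_nonneg fun l _ => ?_
    refine mul_nonneg (mul_nonneg ?_ ?_) (hPi0 I J k l) <;> positivity
  -- conclude via csInf_le
  have hmem : hbar ∈ {v : ℝ | ∃ Γ : Fin n → Fin n → ℝ, (∀ i j, 0 ≤ Γ i j) ∧
      (∀ i, ∑ j, Γ i j = a i) ∧ (∀ j, ∑ i, Γ i j = b j) ∧
      v = ∑ i, ∑ j, Γ i j * C i j} :=
    ⟨Pibar, hbar0, hbarrow, hbarcol, part1⟩
  refine csInf_le ⟨0, fun v hv => ?_⟩ hmem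
  obtain ⟨Γ, hΓ0, -, -, rfl⟩ := hv
  exact Finset.sum_nonneg fun i _ => Finset.sum_nonneg fun j _ =>
    mul_nonneg (hΓ0 i j) (hC i j)
end

section
/- Let n ≥ 3 and let x₁, x₂, x₃ ∈ ℝ^d be pairwise distinct points among a dataset, with uniform weights. Then for 1 ≤ m < n the minibatch OT loss h̄(u,u) between a distribution and itself is strictly positive: there exist minibatches I₁ = (i₁,i₂), I₂ = (i₁,i₃) with W(w(u,I₁), w(u,I₂), C(X(I₁),X(I₂))) > 0 because x₂ ≠ x₃, hence h̄(u,u) > 0. In particular the minibatch OT loss is not a distance (it fails the separation axiom d(μ,μ)=0). -/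
open Finset

/-- The discrete optimal transport cost between probability vectors `a, b ∈ Σ_m`
for a cost matrix `C`, as an infimum over couplings. -/
noncomputable def OTcost {m : ℕ} (a b : Fin m → ℝ) (C : Fin m → Fin m → ℝ) : ℝ :=
  sInf {v : ℝ | ∃ Γ : Fin m → Fin m → ℝ, (∀ k l, 0 ≤ Γ k l) ∧
    (∀ k, ∑ l, Γ k l = a k) ∧ (∀ l, ∑ k, Γ k l = b l) ∧
    v = ∑ k, ∑ l, Γ k l * C k l}

lemma OTcost_nonneg {m : ℕ} (a b : Fin m → ℝ) (C : Fin m → Fin m → ℝ)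
    (hC : ∀ k l, 0 ≤ C k l) : 0 ≤ OTcost a b C := by
  apply Real.sInf_nonneg
  rintro v ⟨Γ, hΓ, _, _, rfl⟩
  exact Finset.sum_nonneg fun k _ => Finset.sum_nonneg fun l _ =>
    mul_nonneg (hΓ k l) (hC k l)

/-- Kantorovich dual lower bound for the discrete OT cost with uniform marginals,
using the 1-Lipschitz test function `x ↦ dist x p`. -/
lemma OTcost_lower {n m : ℕ} {E : Type*} [MetricSpace E] (hm : 1 ≤ m)
    (X : Fin n → E) (I J : Fin m → Fin n) (p : E) :
    ((∑ l, dist (X (J l)) p) - ∑ k, dist (X (I k)) p) / m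
      ≤ OTcost (fun _ => (1:ℝ)/m) (fun _ => (1:ℝ)/m)
          (fun k l => dist (X (I k)) (X (J l))) := by
  have hm0 : (0:ℝ) < m := by exact_mod_cast hm
  have hmne : (m:ℝ) ≠ 0 := ne_of_gt hm0
  apply le_csInf
  · refine ⟨∑ k : Fin m, ∑ l : Fin m, ((1/m) * (1/m)) * dist (X (I k)) (X (J l)),
      fun _ _ => (1/m) * (1/m), fun k l => by positivity, ?_, ?_, rfl⟩
    · intro k
      simp [Finset.sum_const]
      field_simp
    · intro l
      simp [Finset.sum_const]
      field_simp
  · rintro v ⟨Γ, hΓ, hrow, hcol, rfl⟩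
    have key : ∀ k l : Fin m,
        dist (X (J l)) p - dist (X (I k)) p ≤ dist (X (I k)) (X (J l)) := by
      intro k l
      have h1 := dist_triangle (X (J l)) (X (I k)) p
      have h2 := dist_comm (X (J l)) (X (I k))
      linarith
    have step1 : ∑ k, ∑ l, Γ k l * (dist (X (J l)) p - dist (X (I k)) p)
        ≤ ∑ k, ∑ l, Γ k l * dist (X (I k)) (X (J l)) :=
      Finset.sum_le_sum fun k _ => Finset.sum_le_sum fun l _ =>
        mul_le_mul_of_nonneg_left (key k l) (hΓ k l)
    have expand : ∑ k, ∑ l, Γ k l * (dist (X (J l)) p - dist (X (I k)) p)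
        = ((∑ l, dist (X (J l)) p) - ∑ k, dist (X (I k)) p) / m := by
      have hA : ∑ k, ∑ l, Γ k l * dist (X (J l)) p
          = (∑ l, dist (X (J l)) p) / m := by
        rw [Finset.sum_comm]
        have : ∀ l : Fin m, ∑ k, Γ k l * dist (X (J l)) p
            = dist (X (J l)) p / m := by
          intro l
          rw [← Finset.sum_mul, hcol l]
          ring
        rw [Finset.sum_congr rfl fun l _ => this l, ← Finset.sum_div]
      have hB : ∑ k, ∑ l, Γ k l * dist (X (I k)) p
          = (∑ k, dist (X (I k)) p) / m := by
        have : ∀ k : Fin m, ∑ l, Γ k l * dist (X (I k)) p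
            = dist (X (I k)) p / m := by
          intro k
          rw [← Finset.sum_mul, hrow k]
          ring
        rw [Finset.sum_congr rfl fun k _ => this k, ← Finset.sum_div]
      simp_rw [mul_sub, Finset.sum_sub_distrib]
      rw [hA, hB, sub_div]
    linarith [step1, expand.symm.le, expand.le]

/-- If a dataset with uniform weights contains three pairwise distinct points,
then for `1 ≤ m < n` the minibatch OT loss `h̄(u,u)` between the distribution
and itself (sampling without replacement, with uniform minibatch weights and
ground cost the distance) is strictly positive; in particular the minibatch OT
loss fails the separation axiom of a distance. -/
theorem stmt9 (n m d : ℕ) (hm : 1 ≤ m) (hmn : m < n)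
    (X : Fin n → EuclideanSpace ℝ (Fin d))
    (hdist : ∃ i₁ i₂ i₃ : Fin n, X i₁ ≠ X i₂ ∧ X i₁ ≠ X i₃ ∧ X i₂ ≠ X i₃) :
    0 < ∑ I : Fin m → Fin n, ∑ J : Fin m → Fin n,
        ((if Function.Injective I then (Nat.factorial (n - m) : ℝ) / (Nat.factorial n) else 0) *
          (if Function.Injective J then (Nat.factorial (n - m) : ℝ) / (Nat.factorial n) else 0)) *
          OTcost (fun _ => (1 : ℝ) / m) (fun _ => (1 : ℝ) / m)
            (fun k l => dist (X (I k)) (X (J l))) := by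
  obtain ⟨i₁, i₂, i₃, h12, h13, h23⟩ := hdist
  have hab : i₂ ≠ i₃ := fun h => h23 (by rw [h])
  have hm0 : (0:ℝ) < m := by exact_mod_cast hm
  -- weight of an injective minibatch
  set w : ℝ := (Nat.factorial (n - m) : ℝ) / (Nat.factorial n) with hw
  have hwpos : 0 < w := by
    apply div_pos <;> exact_mod_cast Nat.factorial_pos _
  -- construct I₀ : injective, contains i₂, avoids i₃
  have hcard : m - 1 ≤ ((Finset.univ.erase i₃).erase i₂).card := by
    rw [Finset.card_erase_of_mem (Finset.mem_erase.mpr ⟨hab, Finset.mem_univ _⟩),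
      Finset.card_erase_of_mem (Finset.mem_univ _), Finset.card_univ, Fintype.card_fin]
    omega
  obtain ⟨t', ht'sub, ht'card⟩ := Finset.exists_subset_card_eq hcard
  have hi₂t' : i₂ ∉ t' := fun h => (Finset.mem_erase.mp (ht'sub h)).1 rfl
  have hi₃t' : i₃ ∉ t' := fun h =>
    (Finset.mem_erase.mp (Finset.mem_erase.mp (ht'sub h)).2).1 rfl
  set t : Finset (Fin n) := insert i₂ t' with ht
  have htcard : t.card = m := by
    rw [ht, Finset.card_insert_of_notMem hi₂t', ht'card]; omega
  have hi₃t : i₃ ∉ t := by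
    rw [ht, Finset.mem_insert]
    push_neg
    exact ⟨fun h => hab h.symm, hi₃t'⟩
  set e : t ≃ Fin m := t.equivFinOfCardEq htcard with he
  set I₀ : Fin m → Fin n := fun k => ((e.symm k : t) : Fin n) with hI₀
  have hI₀mem : ∀ k, I₀ k ∈ t := fun k => (e.symm k).2
  have hI₀inj : Function.Injective I₀ := fun k k' h => by
    have := Subtype.ext (p := (· ∈ t)) h
    exact e.symm.injective this
  set J₀ : Fin m → Fin n := fun k => if I₀ k = i₂ then i₃ else I₀ k with hJ₀
  have hJ₀inj : Function.Injective J₀ := by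
    intro k k' h
    simp only [hJ₀] at h
    by_cases h1 : I₀ k = i₂ <;> by_cases h2 : I₀ k' = i₂
    · exact hI₀inj (h1.trans h2.symm)
    · rw [if_pos h1, if_neg h2] at h
      exact absurd (h ▸ hI₀mem k') hi₃t
    · rw [if_neg h1, if_pos h2] at h
      exact absurd (h.symm ▸ hI₀mem k) hi₃t
    · rw [if_neg h1, if_neg h2] at h
      exact hI₀inj h
  -- the unique index mapping to i₂
  set k₂ : Fin m := e ⟨i₂, Finset.mem_insert_self _ _⟩ with hk₂
  have hIk₂ : I₀ k₂ = i₂ := by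
    simp only [hI₀, hk₂, Equiv.symm_apply_apply]
  -- the dual gap at (I₀, J₀)
  have hsum : ((∑ l, dist (X (J₀ l)) (X i₂)) - ∑ k, dist (X (I₀ k)) (X i₂))
      = dist (X i₃) (X i₂) := by
    rw [← Finset.sum_sub_distrib]
    rw [Finset.sum_eq_single k₂]
    · simp [hJ₀, hIk₂]
    · intro k _ hk
      have hkne : I₀ k ≠ i₂ := fun h => hk (hI₀inj (h.trans hIk₂.symm))
      simp only [hJ₀, if_neg hkne, sub_self]
    · intro h
      exact absurd (Finset.mem_univ k₂) h
  have hOTpos : 0 < OTcost (fun _ => (1:ℝ)/m) (fun _ => (1:ℝ)/m)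
      (fun k l => dist (X (I₀ k)) (X (J₀ l))) := by
    refine lt_of_lt_of_le ?_ (OTcost_lower hm X I₀ J₀ (X i₂))
    rw [hsum]
    apply div_pos (dist_pos.mpr (fun h => h23 h.symm)) hm0
  -- positivity of the double sum
  have hnonneg : ∀ I : Fin m → Fin n, ∀ J : Fin m → Fin n,
      0 ≤ ((if Function.Injective I then w else 0) *
        (if Function.Injective J then w else 0)) *
        OTcost (fun _ => (1:ℝ)/m) (fun _ => (1:ℝ)/m)
          (fun k l => dist (X (I k)) (X (J l))) := by
    intro I J
    apply mul_nonneg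
    · apply mul_nonneg <;> (split <;> simp [le_of_lt hwpos])
    · exact OTcost_nonneg _ _ _ fun k l => dist_nonneg
  apply Finset.sum_pos'
  · intro I _
    exact Finset.sum_nonneg fun J _ => hnonneg I J
  · refine ⟨I₀, Finset.mem_univ _, Finset.sum_pos' (fun J _ => hnonneg I₀ J)
      ⟨J₀, Finset.mem_univ _, ?_⟩⟩
    rw [if_pos hI₀inj, if_pos hJ₀inj]
    exact mul_pos (mul_pos hwpos hwpos) hOTpos
end

section
/- Let u ∈ Σ_n be uniform and let the 1D minibatch Wasserstein plan (sampling without replacement, minibatch size m) between two sorted 1D samples be defined via the identity coupling on each pair of sorted minibatches. Then the (j,k) entry of the averaged plan is Π̄_{j,k} = (1/m)·binom(n,m)^{-2}·∑_{i=i_min}^{i_max} binom(j-1,i-1)·binom(k-1,i-1)·binom(n-j,m-i)·binom(n-k,m-i), where i_min = max(0, m-n+j, m-n+k) and i_max = min(j,k). Moreover each row of Π̄ sums to 1/n. -/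
open Finset

lemma rank_orderIso {n m : ℕ} (I : Finset (Fin n)) (hI : I.card = m) (i : Fin m) :
    (I.filter (fun x => x ≤ (I.orderIsoOfFin hI i : Fin n))).card = i + 1 := by
  set e := I.orderIsoOfFin hI with he
  have himg : I.filter (fun x => x ≤ (e i : Fin n)) =
      (Finset.Iic i).image (fun t => (e t : Fin n)) := by
    ext x
    simp only [mem_filter, mem_image, mem_Iic]
    constructor
    · rintro ⟨hx, hle⟩
      refine ⟨e.symm ⟨x, hx⟩, ?_, by simp⟩
      rw [← e.le_iff_le]
      simpa using (show (⟨x, hx⟩ : {y // y ∈ I}) ≤ e i from hle)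
    · rintro ⟨t, ht, rfl⟩
      exact ⟨(e t).2, by exact_mod_cast e.le_iff_le.mpr ht⟩
  rw [himg, Finset.card_image_of_injective _ (fun a b hab => e.injective (Subtype.ext hab)),
    Fin.card_Iic]

lemma rank_iff {n m : ℕ} (I : Finset (Fin n)) (hI : I.card = m) (j : Fin n) (p : ℕ) :
    (j ∈ I ∧ (I.filter (fun x => x ≤ j)).card = p + 1) ↔
      ∃ hp : p < m, (I.orderIsoOfFin hI ⟨p, hp⟩ : Fin n) = j := by
  constructor
  · rintro ⟨hj, hrank⟩
    set e := I.orderIsoOfFin hI with he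
    set t := e.symm ⟨j, hj⟩ with ht
    have hjt : (e t : Fin n) = j := by simp [ht]
    have := rank_orderIso I hI t
    rw [hjt, hrank] at this
    have htp : (t : ℕ) = p := by omega
    have hlt : p < m := htp ▸ t.isLt
    have hteq : (⟨p, hlt⟩ : Fin m) = t := Fin.ext htp.symm
    exact ⟨hlt, by rw [hteq, hjt]⟩
  · rintro ⟨hp, rfl⟩
    exact ⟨(I.orderIsoOfFin hI ⟨p, hp⟩).2, rank_orderIso I hI ⟨p, hp⟩⟩


lemma count_rank {n m : ℕ} (p : ℕ) (hp : p < m) (j : Fin n) :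
    ((powersetCard m (univ : Finset (Fin n))).filter
      (fun I => j ∈ I ∧ (I.filter (fun x => x ≤ j)).card = p + 1)).card
    = (j : ℕ).choose p * (n - 1 - (j : ℕ)).choose (m - 1 - p) := by
  rw [← Fin.card_Ioi (a := j), ← Fin.card_Iio (b := j),
    ← card_powersetCard, ← card_powersetCard, ← card_product]
  apply Finset.card_nbij' (fun I => (I.filter (fun x => x < j), I.filter (fun x => j < x)))
    (fun A => insert j (A.1 ∪ A.2))
  · -- forward membership
    rintro I hI
    simp only [mem_coe, mem_filter, mem_powersetCard_univ] at hI
    obtain ⟨hIm, hj, hrank⟩ := hI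
    have hle : I.filter (fun x => x ≤ j) = insert j (I.filter (fun x => x < j)) := by
      ext x
      simp only [mem_filter, mem_insert]
      constructor
      · rintro ⟨hx, hxe⟩
        rcases eq_or_lt_of_le hxe with h | h
        · exact Or.inl h
        · exact Or.inr ⟨hx, h⟩
      · rintro (rfl | ⟨hx, hxl⟩)
        · exact ⟨hj, le_refl _⟩
        · exact ⟨hx, le_of_lt hxl⟩
    have hnot : j ∉ I.filter (fun x => x < j) := by simp
    have hcardlt : (I.filter (fun x => x < j)).card = p := by
      have := hrank
      rw [hle, card_insert_of_notMem hnot] at this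
      omega
    have hgt : I.filter (fun x => j < x) = I \ I.filter (fun x => x ≤ j) := by
      ext x
      simp only [mem_filter, mem_sdiff, not_and, not_le]
      constructor
      · rintro ⟨hx, hxl⟩; exact ⟨hx, fun _ => hxl⟩
      · rintro ⟨hx, h⟩; exact ⟨hx, h hx⟩
    have hcardgt : (I.filter (fun x => j < x)).card = m - 1 - p := by
      rw [hgt, card_sdiff_of_subset (filter_subset _ _), hrank, hIm]
      omega
    simp only [mem_coe, mem_product, mem_powersetCard]
    refine ⟨⟨fun x hx => ?_, hcardlt⟩, fun x hx => ?_, hcardgt⟩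
    · simp only [mem_filter] at hx; simpa using hx.2
    · simp only [mem_filter] at hx; simpa using hx.2
  · -- backward membership
    rintro ⟨A, B⟩ hAB
    simp only [mem_coe, mem_product, mem_powersetCard] at hAB
    obtain ⟨⟨hA, hAc⟩, hB, hBc⟩ := hAB
    have hjA : j ∉ A := fun h => by simpa using hA h
    have hjB : j ∉ B := fun h => by simpa using hB h
    have hdisj : Disjoint A B := by
      rw [Finset.disjoint_left]
      intro x hxA hxB
      have h1 := hA hxA; have h2 := hB hxB
      simp only [mem_Iio, mem_Ioi] at h1 h2
      exact absurd h2 (not_lt.mpr (le_of_lt h1))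
    simp only [mem_coe, mem_filter, mem_powersetCard_univ]
    constructor
    · rw [card_insert_of_notMem (by simp [hjA, hjB]), card_union_of_disjoint hdisj, hAc, hBc]
      omega
    · refine ⟨mem_insert_self _ _, ?_⟩
      have : (insert j (A ∪ B)).filter (fun x => x ≤ j) = insert j A := by
        ext x
        simp only [mem_filter, mem_insert, mem_union]
        constructor
        · rintro ⟨rfl | hx | hx, hxe⟩
          · exact Or.inl rfl
          · exact Or.inr hx
          · exact absurd hxe (not_le.mpr (by simpa using hB hx))
        · rintro (rfl | hx)
          · exact ⟨Or.inl rfl, le_refl _⟩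
          · exact ⟨Or.inr (Or.inl hx), le_of_lt (by simpa using hA hx)⟩
      rw [this, card_insert_of_notMem hjA, hAc]
  · -- left inverse
    rintro I hI
    simp only [mem_coe, mem_filter, mem_powersetCard_univ] at hI
    obtain ⟨hIm, hj, _⟩ := hI
    ext x
    simp only [mem_insert, mem_union, mem_filter]
    constructor
    · rintro (rfl | ⟨hx, _⟩ | ⟨hx, _⟩) <;> first | exact hj | exact hx
    · intro hx
      rcases lt_trichotomy x j with h | h | h
      · exact Or.inr (Or.inl ⟨hx, h⟩)
      · exact Or.inl h
      · exact Or.inr (Or.inr ⟨hx, h⟩)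
  · -- right inverse
    rintro ⟨A, B⟩ hAB
    simp only [mem_coe, mem_product, mem_powersetCard] at hAB
    obtain ⟨⟨hA, _⟩, hB, _⟩ := hAB
    have h1 : (insert j (A ∪ B)).filter (fun x => x < j) = A := by
      ext x
      simp only [mem_filter, mem_insert, mem_union]
      constructor
      · rintro ⟨rfl | hx | hx, hxl⟩
        · exact absurd hxl (lt_irrefl _)
        · exact hx
        · exact absurd hxl (not_lt.mpr (le_of_lt (by simpa using hB hx)))
      · intro hx
        exact ⟨Or.inr (Or.inl hx), by simpa using hA hx⟩
    have h2 : (insert j (A ∪ B)).filter (fun x => j < x) = B := by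
      ext x
      simp only [mem_filter, mem_insert, mem_union]
      constructor
      · rintro ⟨rfl | hx | hx, hxl⟩
        · exact absurd hxl (lt_irrefl _)
        · exact absurd hxl (not_lt.mpr (le_of_lt (by simpa using hA hx)))
        · exact hx
      · intro hx
        exact ⟨Or.inr (Or.inr hx), by simpa using hB hx⟩
    simp [h1, h2]



lemma sum_count_rank {n m : ℕ} (p : ℕ) (hp : p < m) (hmn : m ≤ n) :
    ∑ k : Fin n, (((powersetCard m (univ : Finset (Fin n))).filter
      (fun I => k ∈ I ∧ (I.filter (fun x => x ≤ k)).card = p + 1)).card)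
    = n.choose m := by
  have hn : 0 < n := by omega
  set s := powersetCard m (univ : Finset (Fin n)) with hs
  set f : Finset (Fin n) → Fin n := fun I =>
    if h : I.card = m then (I.orderIsoOfFin h ⟨p, hp⟩ : Fin n) else ⟨0, hn⟩ with hf
  have hmem : ∀ I ∈ s, f I ∈ (univ : Finset (Fin n)) := fun _ _ => mem_univ _
  have hthis := Finset.card_eq_sum_card_fiberwise hmem
  have hcard : s.card = n.choose m := by
    rw [hs, card_powersetCard, card_univ, Fintype.card_fin]
  rw [← hcard, hthis]
  apply Finset.sum_congr rfl
  intro k _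
  congr 1
  apply Finset.filter_congr
  intro I hI
  have hIc : I.card = m := (mem_powersetCard_univ.mp hI)
  rw [rank_iff I hIc k p]
  simp only [hf, hIc, dif_pos]
  constructor
  · rintro ⟨_, h⟩; exact h
  · intro h; exact ⟨hp, h⟩

lemma sum_count_rank' {n m : ℕ} (hm : 1 ≤ m) (hmn : m ≤ n) (j : Fin n) :
    ∑ p ∈ Finset.range m, (j : ℕ).choose p * (n - 1 - (j : ℕ)).choose (m - 1 - p)
    = (n - 1).choose (m - 1) := by
  have hadd : (j : ℕ) + (n - 1 - (j : ℕ)) = n - 1 := by omega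
  have h := Nat.add_choose_eq (j : ℕ) (n - 1 - (j : ℕ)) (m - 1)
  rw [hadd, Finset.Nat.sum_antidiagonal_eq_sum_range_succ_mk] at h
  have hm1 : (m - 1).succ = m := by omega
  rw [hm1] at h
  rw [h]

lemma double_sum {n m : ℕ} (hm : 1 ≤ m) (j k : Fin n) :
    ∑ I ∈ Finset.powersetCard m (Finset.univ : Finset (Fin n)),
      ∑ J ∈ Finset.powersetCard m (Finset.univ : Finset (Fin n)),
        (if j ∈ I ∧ k ∈ J ∧
            (I.filter (fun x => x ≤ j)).card = (J.filter (fun x => x ≤ k)).card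
          then (1 : ℝ) / m else 0)
    = (1 / m) * ∑ p ∈ Finset.range m,
        ((((powersetCard m (univ : Finset (Fin n))).filter
            (fun I => j ∈ I ∧ (I.filter (fun x => x ≤ j)).card = p + 1)).card : ℝ) *
         (((powersetCard m (univ : Finset (Fin n))).filter
            (fun J => k ∈ J ∧ (J.filter (fun x => x ≤ k)).card = p + 1)).card : ℝ)) := by
  set s := powersetCard m (univ : Finset (Fin n)) with hs
  have key : ∀ I ∈ s, ∀ J ∈ s,
      (if j ∈ I ∧ k ∈ J ∧
          (I.filter (fun x => x ≤ j)).card = (J.filter (fun x => x ≤ k)).card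
        then (1 : ℝ) / m else 0)
      = ∑ p ∈ Finset.range m, (1 / m) *
          ((if j ∈ I ∧ (I.filter (fun x => x ≤ j)).card = p + 1 then (1:ℝ) else 0) *
           (if k ∈ J ∧ (J.filter (fun x => x ≤ k)).card = p + 1 then (1:ℝ) else 0)) := by
    intro I hI J hJ
    have hIc : I.card = m := mem_powersetCard_univ.mp hI
    set a := (I.filter (fun x => x ≤ j)).card with ha
    set b := (J.filter (fun x => x ≤ k)).card with hb
    by_cases hcond : j ∈ I ∧ k ∈ J ∧ a = b
    · obtain ⟨hjI, hkJ, hab⟩ := hcond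
      have ha1 : 1 ≤ a := Finset.card_pos.mpr ⟨j, mem_filter.mpr ⟨hjI, le_refl _⟩⟩
      have ham : a ≤ m := hIc ▸ Finset.card_le_card (filter_subset _ _)
      rw [if_pos ⟨hjI, hkJ, hab⟩]
      rw [Finset.sum_eq_single_of_mem (a - 1) (mem_range.mpr (by omega))]
      · rw [if_pos ⟨hjI, by omega⟩, if_pos ⟨hkJ, by omega⟩]
        ring
      · intro p _ hne
        have : ¬(j ∈ I ∧ a = p + 1) := by rintro ⟨_, h⟩; omega
        rw [if_neg this, zero_mul, mul_zero]
    · rw [if_neg hcond]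
      symm
      apply Finset.sum_eq_zero
      intro p _
      by_cases h1 : j ∈ I ∧ a = p + 1
      · by_cases h2 : k ∈ J ∧ b = p + 1
        · exact absurd ⟨h1.1, h2.1, by omega⟩ hcond
        · rw [if_neg h2, mul_zero, mul_zero]
      · rw [if_neg h1, zero_mul, mul_zero]
  calc ∑ I ∈ s, ∑ J ∈ s, (if j ∈ I ∧ k ∈ J ∧
          (I.filter (fun x => x ≤ j)).card = (J.filter (fun x => x ≤ k)).card
        then (1 : ℝ) / m else 0)
      = ∑ I ∈ s, ∑ J ∈ s, ∑ p ∈ Finset.range m, (1 / m) *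
          ((if j ∈ I ∧ (I.filter (fun x => x ≤ j)).card = p + 1 then (1:ℝ) else 0) *
           (if k ∈ J ∧ (J.filter (fun x => x ≤ k)).card = p + 1 then (1:ℝ) else 0)) := by
        refine Finset.sum_congr rfl fun I hI => Finset.sum_congr rfl fun J hJ => key I hI J hJ
    _ = ∑ p ∈ Finset.range m, ∑ I ∈ s, ∑ J ∈ s, (1 / m) *
          ((if j ∈ I ∧ (I.filter (fun x => x ≤ j)).card = p + 1 then (1:ℝ) else 0) *
           (if k ∈ J ∧ (J.filter (fun x => x ≤ k)).card = p + 1 then (1:ℝ) else 0)) := by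
        rw [show (∑ I ∈ s, ∑ J ∈ s, ∑ p ∈ Finset.range m, (1 / m) *
          ((if j ∈ I ∧ (I.filter (fun x => x ≤ j)).card = p + 1 then (1:ℝ) else 0) *
           (if k ∈ J ∧ (J.filter (fun x => x ≤ k)).card = p + 1 then (1:ℝ) else 0)))
          = ∑ I ∈ s, ∑ p ∈ Finset.range m, ∑ J ∈ s, (1 / m) *
          ((if j ∈ I ∧ (I.filter (fun x => x ≤ j)).card = p + 1 then (1:ℝ) else 0) *
           (if k ∈ J ∧ (J.filter (fun x => x ≤ k)).card = p + 1 then (1:ℝ) else 0))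
          from Finset.sum_congr rfl fun I _ => Finset.sum_comm]
        exact Finset.sum_comm
    _ = (1 / m) * ∑ p ∈ Finset.range m,
        (((s.filter (fun I => j ∈ I ∧ (I.filter (fun x => x ≤ j)).card = p + 1)).card : ℝ) *
         ((s.filter (fun J => k ∈ J ∧ (J.filter (fun x => x ≤ k)).card = p + 1)).card : ℝ)) := by
        rw [Finset.mul_sum]
        refine Finset.sum_congr rfl fun p _ => ?_
        have hfact : ∑ I ∈ s, ∑ J ∈ s, (1 / m : ℝ) *
          ((if j ∈ I ∧ (I.filter (fun x => x ≤ j)).card = p + 1 then (1:ℝ) else 0) *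
           (if k ∈ J ∧ (J.filter (fun x => x ≤ k)).card = p + 1 then (1:ℝ) else 0))
          = (1 / m : ℝ) *
            ((∑ I ∈ s, if j ∈ I ∧ (I.filter (fun x => x ≤ j)).card = p + 1 then (1:ℝ) else 0) *
             (∑ J ∈ s, if k ∈ J ∧ (J.filter (fun x => x ≤ k)).card = p + 1 then (1:ℝ) else 0)) := by
          rw [Finset.sum_mul_sum, Finset.mul_sum]
          exact Finset.sum_congr rfl fun I _ => by rw [Finset.mul_sum]
        rw [hfact, Finset.sum_boole, Finset.sum_boole]



/-- Closed form for the 1D minibatch Wasserstein plan with uniform weights and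
sampling without replacement: averaging over all pairs of `m`-subsets of
`{0,…,n-1}` the identity (sorted) coupling with mass `1/m`, the `(j,k)` entry
of the averaged plan equals
`(1/m)·binom(n,m)⁻²·∑_p binom(j,p)·binom(k,p)·binom(n-1-j,m-1-p)·binom(n-1-k,m-1-p)`
(with `0`-indexed `j,k` and position `p`), and each row sums to `1/n`. -/
theorem stmt16 (n m : ℕ) (hm : 1 ≤ m) (hmn : m ≤ n)
    (Pibar : Fin n → Fin n → ℝ)
    (hPibar : ∀ j k : Fin n, Pibar j k =
      ((n.choose m : ℝ))⁻¹ ^ 2 *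
        ∑ I ∈ Finset.powersetCard m (Finset.univ : Finset (Fin n)),
          ∑ J ∈ Finset.powersetCard m (Finset.univ : Finset (Fin n)),
            (if j ∈ I ∧ k ∈ J ∧
                (I.filter (fun x => x ≤ j)).card = (J.filter (fun x => x ≤ k)).card
              then (1 : ℝ) / m else 0)) :
    (∀ j k : Fin n, Pibar j k =
      (1 / (m : ℝ)) * ((n.choose m : ℝ))⁻¹ ^ 2 *
        ∑ p ∈ Finset.range m,
          ((j.val.choose p * k.val.choose p *
            (n - 1 - j.val).choose (m - 1 - p) *
            (n - 1 - k.val).choose (m - 1 - p) : ℕ) : ℝ)) ∧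
    (∀ j : Fin n, ∑ k, Pibar j k = 1 / n) := by
  have hform : ∀ j k : Fin n, Pibar j k =
      ((n.choose m : ℝ))⁻¹ ^ 2 * ((1 / m) * ∑ p ∈ Finset.range m,
        ((((powersetCard m (univ : Finset (Fin n))).filter
            (fun I => j ∈ I ∧ (I.filter (fun x => x ≤ j)).card = p + 1)).card : ℝ) *
         (((powersetCard m (univ : Finset (Fin n))).filter
            (fun J => k ∈ J ∧ (J.filter (fun x => x ≤ k)).card = p + 1)).card : ℝ))) := by
    intro j k
    rw [hPibar j k, double_sum hm j k]
  constructor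
  · intro j k
    rw [hform j k]
    rw [show (∑ p ∈ Finset.range m,
        ((((powersetCard m (univ : Finset (Fin n))).filter
            (fun I => j ∈ I ∧ (I.filter (fun x => x ≤ j)).card = p + 1)).card : ℝ) *
         (((powersetCard m (univ : Finset (Fin n))).filter
            (fun J => k ∈ J ∧ (J.filter (fun x => x ≤ k)).card = p + 1)).card : ℝ)))
      = ∑ p ∈ Finset.range m,
          ((j.val.choose p * k.val.choose p *
            (n - 1 - j.val).choose (m - 1 - p) *
            (n - 1 - k.val).choose (m - 1 - p) : ℕ) : ℝ) from
      Finset.sum_congr rfl fun p hp => by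
        rw [count_rank p (mem_range.mp hp) j, count_rank p (mem_range.mp hp) k]
        push_cast
        ring]
    ring
  · intro j
    have hn : 0 < n := by omega
    have hsum : ∑ k, Pibar j k =
        ((n.choose m : ℝ))⁻¹ ^ 2 * ((1 / m) * ∑ k : Fin n, ∑ p ∈ Finset.range m,
          ((((powersetCard m (univ : Finset (Fin n))).filter
              (fun I => j ∈ I ∧ (I.filter (fun x => x ≤ j)).card = p + 1)).card : ℝ) *
           (((powersetCard m (univ : Finset (Fin n))).filter
              (fun J => k ∈ J ∧ (J.filter (fun x => x ≤ k)).card = p + 1)).card : ℝ))) := by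
      rw [Finset.mul_sum]
      conv_rhs => rw [Finset.mul_sum]
      exact Finset.sum_congr rfl fun k _ => hform j k
    rw [hsum, Finset.sum_comm]
    have hinner : ∀ p ∈ Finset.range m,
        (∑ k : Fin n,
          ((((powersetCard m (univ : Finset (Fin n))).filter
              (fun I => j ∈ I ∧ (I.filter (fun x => x ≤ j)).card = p + 1)).card : ℝ) *
           (((powersetCard m (univ : Finset (Fin n))).filter
              (fun J => k ∈ J ∧ (J.filter (fun x => x ≤ k)).card = p + 1)).card : ℝ)))
        = ((j : ℕ).choose p * (n - 1 - (j : ℕ)).choose (m - 1 - p) : ℕ) * (n.choose m : ℝ) := by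
      intro p hp
      rw [← Finset.mul_sum, count_rank p (mem_range.mp hp) j]
      congr 1
      rw [← Nat.cast_sum]
      exact_mod_cast congrArg (Nat.cast : ℕ → ℝ) (sum_count_rank p (mem_range.mp hp) hmn)
    rw [Finset.sum_congr rfl hinner, ← Finset.sum_mul, ← Nat.cast_sum,
      sum_count_rank' hm hmn j]
    have hid : n * (n - 1).choose (m - 1) = n.choose m * m := by
      have h := Nat.add_one_mul_choose_eq (n - 1) (m - 1)
      rw [show n - 1 + 1 = n from by omega, show m - 1 + 1 = m from by omega] at h
      exact h
    have hC : (0 : ℝ) < (n.choose m : ℝ) := by exact_mod_cast Nat.choose_pos hmn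
    have hm0 : (m : ℝ) ≠ 0 := by positivity
    have hn0 : (n : ℝ) ≠ 0 := by positivity
    have hidR : (n : ℝ) * ((n - 1).choose (m - 1) : ℝ) = (n.choose m : ℝ) * m := by
      exact_mod_cast hid
    field_simp
    nlinarith [hidR, hC]
end
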